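/- arXiv:2212.10139 — 3 statements merged into one kernel-verified Lean document; each statement's English description precedes it below -/
import Mathlib

section
/- For a mixed unitary qubit channel Φ(ρ) = Σ_j p_j U_j ρ U_j†, writing each U_j = cos(θ_j/2)·I + i·sin(θ_j/2)·(n_j · σ) with unit vectors n_j ∈ ℝ³, the operation fidelity at the pure state with Bloch vector b ∈ S² equals b^T S b, where S is the real symmetric 3×3 matrix S_{kl} = Σ_j p_j (cos²(θ_j/2) δ_{kl} + sin²(θ_j/2) (n_j)_k (n_j)_l). -/
open Matrix

open Matrix Finset in
private lemma swap3 {α} [AddCommMonoid α] {m : ℕ} (f : Fin 3 → Fin 3 → Fin m → α) :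
    ∑ y, ∑ x, ∑ i, f y x i = ∑ i, ∑ y, ∑ x, f y x i := by
  rw [show (∑ y, ∑ x, ∑ i, f y x i) = ∑ y, ∑ i, ∑ x, f y x i from
    Finset.sum_congr rfl fun y _ => Finset.sum_comm, Finset.sum_comm]

/-- For a mixed unitary qubit channel `Φ(ρ) = Σ_j p_j U_j ρ U_j†` with
`U_j = cos(θ_j/2) I + i sin(θ_j/2) (n_j·σ)`, the operation fidelity at the pure state
with Bloch vector `b` equals `bᵀ S b`, where
`S_{kl} = Σ_j p_j (cos²(θ_j/2) δ_{kl} + sin²(θ_j/2) (n_j)_k (n_j)_l)`. -/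
theorem stmt6 (m : ℕ) (p θ : Fin m → ℝ) (n : Fin m → Fin 3 → ℝ)
    (hp : ∀ j, 0 ≤ p j) (hpsum : ∑ j, p j = 1)
    (hn : ∀ j, ∑ k, (n j k) ^ 2 = 1)
    (σ : Fin 3 → Matrix (Fin 2) (Fin 2) ℂ)
    (hσ1 : σ 0 = !![0, 1; 1, 0])
    (hσ2 : σ 1 = !![0, -Complex.I; Complex.I, 0])
    (hσ3 : σ 2 = !![1, 0; 0, -1])
    (U : Fin m → Matrix (Fin 2) (Fin 2) ℂ)
    (hU : ∀ j, U j = (Real.cos (θ j / 2) : ℂ) • (1 : Matrix (Fin 2) (Fin 2) ℂ)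
        + (Complex.I * Real.sin (θ j / 2)) • (∑ k, (n j k : ℂ) • σ k))
    (b : Fin 3 → ℝ) (hb : ∑ k, (b k) ^ 2 = 1)
    (ψ : Fin 2 → ℂ) (hψ : star ψ ⬝ᵥ ψ = 1)
    (hbloch : vecMulVec ψ (star ψ) =
      (1/2 : ℂ) • ((1 : Matrix (Fin 2) (Fin 2) ℂ) + ∑ k, (b k : ℂ) • σ k))
    (S : Matrix (Fin 3) (Fin 3) ℝ)
    (hS : ∀ k l, S k l = ∑ j, p j * ((Real.cos (θ j / 2)) ^ 2 * (if k = l then 1 else 0)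
        + (Real.sin (θ j / 2)) ^ 2 * n j k * n j l)) :
    ∑ j, p j * ‖star ψ ⬝ᵥ (U j *ᵥ ψ)‖ ^ 2 = ∑ k, ∑ l, b k * S k l * b l := by
  have h00 := congrFun (congrFun hbloch 0) 0
  have h01 := congrFun (congrFun hbloch 0) 1
  have h10 := congrFun (congrFun hbloch 1) 0
  have h11 := congrFun (congrFun hbloch 1) 1
  simp [vecMulVec_apply, hσ1, hσ2, hσ3, Fin.sum_univ_three, Matrix.add_apply,
    Matrix.smul_apply, Matrix.one_apply] at h00 h01 h10 h11
  have hseq : ∀ k, star ψ ⬝ᵥ (σ k *ᵥ ψ) = (b k : ℂ) := by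
    intro k
    fin_cases k <;>
      simp [hσ1, hσ2, hσ3, dotProduct, mulVec, Fin.sum_univ_two, Pi.star_apply]
    · linear_combination h01 + h10
    · linear_combination Complex.I * h01 - Complex.I * h10 - (b 1 : ℂ) * Complex.I_sq
    · linear_combination h00 - h11
  have hz : ∀ j, star ψ ⬝ᵥ (U j *ᵥ ψ)
      = (Real.cos (θ j / 2) : ℂ) + (Real.sin (θ j / 2) * (∑ k, n j k * b k) : ℝ) * Complex.I := by
    intro j
    rw [hU]
    simp only [add_mulVec, smul_mulVec, Matrix.one_mulVec, dotProduct_add, dotProduct_smul, Matrix.sum_mulVec, dotProduct_sum, hψ, hseq]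
    simp [add_mulVec, smul_mulVec, Matrix.one_mulVec, dotProduct_add,
      dotProduct_smul, Fin.sum_univ_three, hψ, hseq]
    push_cast
    ring
  have habs : ∀ j, ‖star ψ ⬝ᵥ (U j *ᵥ ψ)‖ ^ 2
      = Real.cos (θ j / 2) ^ 2 + (Real.sin (θ j / 2) * (∑ k, n j k * b k)) ^ 2 := by
    intro j
    rw [hz j, Complex.sq_norm, Complex.normSq_add_mul_I]
  simp only [habs, hS, Finset.mul_sum, Finset.sum_mul]
  rw [swap3]
  refine Finset.sum_congr rfl fun j _ => ?_
  simp only [Fin.sum_univ_three]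
  norm_num [Fin.ext_iff]
  have hb3 : b 0 ^ 2 + b 1 ^ 2 + b 2 ^ 2 = 1 := by
    simpa [Fin.sum_univ_three] using hb
  linear_combination (-(p j * Real.cos (θ j / 2) ^ 2)) * hb3
end

section
/- For d−1 commuting Hermitian d×d matrices H₁,…,H_{d−1}, the family {H₁,…,H_{d−1}, I_d} is linearly independent if and only if the joint numerical range W(H₁,…,H_{d−1}) ⊂ ℝ^{d−1} is a non-degenerate (d−1)-dimensional simplex (i.e., it is the convex hull of d affinely independent points). -/
open Matrix

set_option maxHeartbeats 1600000 in
/-- For `d` commuting Hermitian matrices `H₁,…,H_d` of size `d+1`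
(playing the role of `d−1` matrices of size `d`), the family `{H_i} ∪ {I}` is linearly
independent (over ℝ) iff the joint numerical range
`W(H₁,…,H_d) ⊂ ℝ^d` is a non-degenerate `d`-dimensional simplex, i.e. the convex hull
of `d+1` affinely independent points. -/
theorem stmt12 (d : ℕ) (H : Fin d → Matrix (Fin (d+1)) (Fin (d+1)) ℂ)
    (hherm : ∀ i, (H i).IsHermitian)
    (hcomm : ∀ i j, Commute (H i) (H j))
    (W : Set (Fin d → ℝ))
    (hW : W = {x | ∃ ψ : Fin (d+1) → ℂ, star ψ ⬝ᵥ ψ = 1 ∧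
        ∀ i, x i = (star ψ ⬝ᵥ (H i *ᵥ ψ)).re}) :
    LinearIndependent ℝ (Fin.cons (1 : Matrix (Fin (d+1)) (Fin (d+1)) ℂ) H) ↔
      ∃ v : Fin (d+1) → (Fin d → ℝ), AffineIndependent ℝ v ∧
        W = convexHull ℝ (Set.range v) := by
  classical
  set T : Fin d → ((EuclideanSpace ℂ (Fin (d+1))) →ₗ[ℂ] (EuclideanSpace ℂ (Fin (d+1)))) := fun i => Matrix.toEuclideanLin (H i) with hT
  have hsym : ∀ i, (T i).IsSymmetric := fun i => Matrix.isHermitian_iff_isSymmetric.mp (hherm i)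
  have hcommT : Pairwise (Function.onFun Commute T) := by
    intro i j _
    have key : ∀ A B : Matrix (Fin (d+1)) (Fin (d+1)) ℂ,
        Matrix.toEuclideanLin (A * B) = Matrix.toEuclideanLin A ∘ₗ Matrix.toEuclideanLin B := by
      intro A B
      apply LinearMap.ext
      intro x
      simp [Matrix.toEuclideanLin_apply, Matrix.mulVec_mulVec]
    show T i * T j = T j * T i
    have h1 : T i * T j = Matrix.toEuclideanLin (H i * H j) := by rw [key]; rfl
    have h2 : T j * T i = Matrix.toEuclideanLin (H j * H i) := by rw [key]; rfl
    rw [h1, h2, hcomm i j]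
  have hn : Module.finrank ℂ (EuclideanSpace ℂ (Fin (d+1))) = d + 1 := finrank_euclideanSpace_fin
  set V : (Fin d → ℂ) → Submodule ℂ (EuclideanSpace ℂ (Fin (d+1))) := fun χ => ⨅ j, Module.End.eigenspace (T j) (χ j) with hV
  have hint0 : DirectSum.IsInternal V :=
    LinearMap.IsSymmetric.LinearMap.IsSymmetric.directSum_isInternal_of_pairwise_commute hsym hcommT
  have hint : DirectSum.IsInternal (fun χ : {χ // V χ ≠ ⊥} => V χ) :=
    DirectSum.isInternal_ne_bot_iff.mpr hint0
  have hfin : Finite {χ // V χ ≠ ⊥} :=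
    WellFoundedGT.finite_ne_bot_of_iSupIndep hint0.submodule_iSupIndep
  have : Fintype {χ // V χ ≠ ⊥} := Fintype.ofFinite _
  have hfam := (LinearMap.IsSymmetric.orthogonalFamily_iInf_eigenspaces hsym).comp
      (Subtype.val_injective : Function.Injective (Subtype.val : {χ // V χ ≠ ⊥} → (Fin d → ℂ)))
  set b : OrthonormalBasis (Fin (d+1)) ℂ (EuclideanSpace ℂ (Fin (d+1))) := hint.subordinateOrthonormalBasis hn hfam with hbdef
  set χ : Fin (d+1) → Fin d → ℂ :=
    fun a => (hint.subordinateOrthonormalBasisIndex hn a hfam).val with hχdef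
  have hb : ∀ a i, T i (b a) = χ a i • b a := by
    intro a i
    have h := hint.subordinateOrthonormalBasis_subordinate hn a hfam
    have h' : b a ∈ ⨅ j, Module.End.eigenspace (T j) (χ a j) := h
    rw [Submodule.mem_iInf] at h'
    exact (Module.End.mem_eigenspace_iff).mp (h' i)
  -- realness
  have hreal : ∀ a i, (starRingEnd ℂ) (χ a i) = χ a i := by
    intro a i
    exact (hsym i).conj_eigenvalue_eq_self
      (Module.End.hasEigenvalue_of_hasEigenvector ⟨Module.End.mem_eigenspace_iff.mpr (hb a i), b.orthonormal.ne_zero a⟩)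
  -- eigenvalue reals as points
  set v : Fin (d+1) → Fin d → ℝ := fun a i => (χ a i).re with hv
  have hχv : ∀ a i, ((v a i : ℝ) : ℂ) = χ a i := by
    intro a i
    simpa [hv] using Complex.conj_eq_iff_re.mp (hreal a i)
  -- inner product computations
  have hinner0 : ∀ u : Fin (d+1) → ℂ,
      (inner ℂ (∑ a, u a • b a) (∑ a, u a • b a) : ℂ) = ∑ a, (starRingEnd ℂ) (u a) * u a :=
    fun u => b.orthonormal.inner_sum u u Finset.univ
  have hTsum : ∀ (i : Fin d) (u : Fin (d+1) → ℂ),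
      T i (∑ a, u a • b a) = ∑ a, (u a * χ a i) • b a := by
    intro i u
    rw [map_sum]
    refine Finset.sum_congr rfl fun a _ => ?_
    rw [(T i).map_smul, hb a i, smul_smul]
  have hinnerT : ∀ (i : Fin d) (u : Fin (d+1) → ℂ),
      (inner ℂ (∑ a, u a • b a) (T i (∑ a, u a • b a)) : ℂ)
        = ∑ a, (starRingEnd ℂ) (u a) * u a * χ a i := by
    intro i u
    rw [hTsum i u, b.orthonormal.inner_sum u (fun a => u a * χ a i) Finset.univ]
    refine Finset.sum_congr rfl fun a _ => ?_
    ring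
  -- identification of dot products with inner products
  have hdot1 : ∀ ψ : Fin (d+1) → ℂ, star ψ ⬝ᵥ ψ
      = (inner ℂ ((WithLp.equiv 2 _).symm ψ) ((WithLp.equiv 2 _).symm ψ) : ℂ) := fun ψ => by rw [dotProduct_comm]; rfl
  have hdot2 : ∀ (i : Fin d) (ψ : Fin (d+1) → ℂ), star ψ ⬝ᵥ (H i *ᵥ ψ)
      = (inner ℂ ((WithLp.equiv 2 _).symm ψ) (T i ((WithLp.equiv 2 _).symm ψ)) : ℂ) := by
    intro i ψ
    rw [hT]
    rw [dotProduct_comm]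
    rfl
  set S : Set (Fin d → ℝ) :=
    {x | ∃ w : Fin (d+1) → ℝ, (∀ a, 0 ≤ w a) ∧ ∑ a, w a = 1 ∧ x = ∑ a, w a • v a} with hS
  have hxS : ∀ (x : Fin d → ℝ) (w : Fin (d+1) → ℝ), x = ∑ a, w a • v a →
      ∀ i, x i = ∑ a, w a * v a i := by
    intro x w hx i
    rw [hx]
    simp [Finset.sum_apply]
  have hWS' : ∀ ψ : Fin (d+1) → ℂ, ∀ x : Fin d → ℝ, star ψ ⬝ᵥ ψ = 1 →
      (∀ i, x i = (star ψ ⬝ᵥ (H i *ᵥ ψ)).re) → x ∈ S := by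
    intro ψ x hψ1 hψ2
    set u : Fin (d+1) → ℂ := fun a => b.repr ((WithLp.equiv 2 _).symm ψ) a with hu
    have hexp : ((WithLp.equiv 2 (Fin (d+1) → ℂ)).symm ψ : EuclideanSpace ℂ (Fin (d+1)))
        = ∑ a, u a • b a := (b.sum_repr _).symm
    refine ⟨fun a => Complex.normSq (u a), fun a => Complex.normSq_nonneg _, ?_, ?_⟩
    · have h1 : ((∑ a, Complex.normSq (u a) : ℝ) : ℂ) = 1 := by
        rw [← hψ1, hdot1 ψ, hexp, hinner0]
        push_cast
        refine Finset.sum_congr rfl fun a _ => ?_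
        rw [Complex.normSq_eq_conj_mul_self]
      exact_mod_cast h1
    · funext i
      have h2 : star ψ ⬝ᵥ (H i *ᵥ ψ) = ((∑ a, Complex.normSq (u a) * v a i : ℝ) : ℂ) := by
        rw [hdot2 i ψ, hexp, hinnerT]
        push_cast
        refine Finset.sum_congr rfl fun a _ => ?_
        rw [Complex.normSq_eq_conj_mul_self, hχv a i]
      rw [hψ2 i, h2]
      rw [Complex.ofReal_re]
      simp [Finset.sum_apply]
  have hWS : W = S := by
    rw [hW]
    ext x
    constructor
    · rintro ⟨ψ, hψ1, hψ2⟩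
      exact hWS' ψ x hψ1 hψ2
    · rintro ⟨w, hw0, hw1, rfl⟩
      set u : Fin (d+1) → ℂ := fun a => (Real.sqrt (w a) : ℂ) with hu
      set ψ : Fin (d+1) → ℂ := WithLp.equiv 2 (Fin (d+1) → ℂ) (∑ a, u a • b a) with hψ
      have hexp : ((WithLp.equiv 2 (Fin (d+1) → ℂ)).symm ψ : EuclideanSpace ℂ (Fin (d+1)))
          = ∑ a, u a • b a := by rw [hψ]; exact (WithLp.equiv 2 _).symm_apply_apply _
      have huu : ∀ a, (starRingEnd ℂ) (u a) * u a = ((w a : ℝ) : ℂ) := by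
        intro a
        rw [hu]
        simp only [Complex.conj_ofReal]
        rw [← Complex.ofReal_mul, Real.mul_self_sqrt (hw0 a)]
      have hψ1 : star ψ ⬝ᵥ ψ = 1 := by
        rw [hdot1 ψ, hexp, hinner0]
        have : ∀ a ∈ Finset.univ, (starRingEnd ℂ) (u a) * u a = ((w a : ℝ) : ℂ) :=
          fun a _ => huu a
        rw [Finset.sum_congr rfl this, ← Complex.ofReal_sum]
        rw [hw1]
        norm_num
      refine ⟨ψ, hψ1, fun i => ?_⟩
      have h2 : star ψ ⬝ᵥ (H i *ᵥ ψ) = ((∑ a, w a * v a i : ℝ) : ℂ) := by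
        rw [hdot2 i ψ, hexp, hinnerT]
        push_cast
        refine Finset.sum_congr rfl fun a _ => ?_
        rw [huu a, hχv a i]
      rw [h2, Complex.ofReal_re]
      simp [Finset.sum_apply]
  have hShull : S = convexHull ℝ (Set.range v) := by
    apply Set.Subset.antisymm
    · rintro x ⟨w, hw0, hw1, rfl⟩
      have hmem := Finset.centerMass_mem_convexHull (s := Set.range v) (z := v)
        (Finset.univ) (fun a _ => hw0 a) (by rw [hw1]; norm_num)
        (fun a (_ : a ∈ Finset.univ) => Set.mem_range_self a)
      rwa [Finset.centerMass_eq_of_sum_1 _ _ hw1] at hmem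
    · apply convexHull_min
      · rintro _ ⟨a₀, rfl⟩
        classical
        refine ⟨fun a => if a = a₀ then 1 else 0, fun a => by by_cases h : a = a₀ <;> simp [h], by simp, ?_⟩
        simp [ite_smul]
      · rintro x ⟨w, hw0, hw1, rfl⟩ y ⟨w', hw0', hw1', rfl⟩ p q hp hq hpq
        refine ⟨fun a => p * w a + q * w' a,
          fun a => add_nonneg (mul_nonneg hp (hw0 a)) (mul_nonneg hq (hw0' a)), ?_, ?_⟩
        · rw [Finset.sum_add_distrib, ← Finset.mul_sum, ← Finset.mul_sum, hw1, hw1']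
          simpa using hpq
        · rw [Finset.smul_sum, Finset.smul_sum, ← Finset.sum_add_distrib]
          refine Finset.sum_congr rfl fun a _ => ?_
          rw [add_smul, smul_smul, smul_smul]
  set F : Fin (d+1) → Matrix (Fin (d+1)) (Fin (d+1)) ℂ := Fin.cons 1 H with hF
  have hF0 : F 0 = 1 := rfl
  have hFs : ∀ i : Fin d, F i.succ = H i := fun i => rfl
  -- smul conversion
  have hsmulM : ∀ (r : ℝ) (M' : Matrix (Fin (d+1)) (Fin (d+1)) ℂ), r • M' = (r : ℂ) • M' := by
    intro r M'
    ext a c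
    simp [Complex.real_smul]
  have hone : ∀ x : EuclideanSpace ℂ (Fin (d+1)),
      Matrix.toEuclideanLin (1 : Matrix (Fin (d+1)) (Fin (d+1)) ℂ) x = x := by
    intro x
    rw [Matrix.toEuclideanLin_apply]
    simp
  have hkey : ∀ (g : Fin (d+1) → ℝ) (a : Fin (d+1)),
      Matrix.toEuclideanLin (∑ k, g k • F k) (b a)
        = (((g 0 : ℂ)) + ∑ i, (g i.succ : ℂ) * χ a i) • b a := by
    intro g a
    rw [map_sum]
    rw [LinearMap.sum_apply]
    have : ∀ k, (Matrix.toEuclideanLin (g k • F k)) (b a)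
        = ((g k : ℂ) * (Fin.cons 1 (χ a) : Fin (d+1) → ℂ) k) • b a := by
      intro k
      rw [hsmulM, _root_.map_smul, LinearMap.smul_apply]
      refine Fin.cases ?_ ?_ k
      · rw [hF0]
        simp only [Fin.cons_zero]
        rw [hone, mul_one]
      · intro i
        rw [hFs]
        simp only [Fin.cons_succ]
        have : Matrix.toEuclideanLin (H i) (b a) = χ a i • b a := hb a i
        rw [this, smul_smul]
    rw [Finset.sum_congr rfl (fun k _ => this k)]
    rw [← Finset.sum_smul]
    congr 1
    rw [Fin.sum_univ_succ]
    simp [Fin.cons_zero, Fin.cons_succ]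
  have hzero_iff : ∀ g : Fin (d+1) → ℝ,
      (∑ k, g k • F k = 0)
        ↔ ∀ a, g 0 + ∑ i, g i.succ * v a i = 0 := by
    intro g
    constructor
    · intro h a
      have h2 := hkey g a
      rw [h] at h2
      rw [map_zero, LinearMap.zero_apply] at h2
      have h3 : ((g 0 : ℂ) + ∑ i, (g i.succ : ℂ) * χ a i) = 0 := by
        rcases smul_eq_zero.mp h2.symm with h4 | h4
        · exact h4
        · exact absurd h4 (b.orthonormal.ne_zero a)
      have h4 : (((g 0 + ∑ i, g i.succ * v a i : ℝ)) : ℂ) = 0 := by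
        rw [← h3]
        push_cast
        refine congrArg _ (Finset.sum_congr rfl fun i _ => ?_)
        rw [hχv a i]
      exact_mod_cast h4
    · intro h
      apply (Matrix.toEuclideanLin (𝕜 := ℂ)).injective
      rw [map_zero]
      apply b.toBasis.ext
      intro a
      rw [OrthonormalBasis.coe_toBasis]
      rw [LinearMap.zero_apply, hkey g a]
      have h4 : ((g 0 : ℂ) + ∑ i, (g i.succ : ℂ) * χ a i) = (((g 0 + ∑ i, g i.succ * v a i : ℝ)) : ℂ) := by
        push_cast
        refine congrArg _ (Finset.sum_congr rfl fun i _ => ?_)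
        rw [hχv a i]
      rw [h4, h a]
      simp
  have hLIiff : LinearIndependent ℝ F
      ↔ ∀ g : Fin (d+1) → ℝ, (∀ a, g 0 + ∑ i, g i.succ * v a i = 0) → g = 0 := by
    rw [Fintype.linearIndependent_iff]
    constructor
    · intro hli g hg
      funext k
      exact hli g ((hzero_iff g).mpr hg) k
    · intro h g hg
      intro k
      exact congrFun (h g ((hzero_iff g).mp hg)) k
  -- the real matrix N
  set N : Matrix (Fin (d+1)) (Fin (d+1)) ℝ := Matrix.of (fun a => Fin.cons 1 (v a)) with hN
  have hNmul : ∀ (g : Fin (d+1) → ℝ) (a : Fin (d+1)),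
      (N *ᵥ g) a = g 0 + ∑ i, g i.succ * v a i := by
    intro g a
    show (Fin.cons 1 (v a) : Fin (d+1) → ℝ) ⬝ᵥ g = _
    rw [dotProduct, Fin.sum_univ_succ]
    simp [Fin.cons_zero, Fin.cons_succ, mul_comm]
  have hQdet : (∀ g : Fin (d+1) → ℝ, (∀ a, g 0 + ∑ i, g i.succ * v a i = 0) → g = 0)
      ↔ N.det ≠ 0 := by
    constructor
    · intro h hdet
      obtain ⟨g, hg0, hg⟩ := Matrix.exists_mulVec_eq_zero_iff.mpr hdet
      refine hg0 (h g (fun a => ?_))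
      rw [← hNmul g a, hg]
      rfl
    · intro hdet g hg
      by_contra hne
      refine hdet (Matrix.exists_mulVec_eq_zero_iff.mp ⟨g, hne, funext fun a => ?_⟩)
      rw [hNmul g a, hg a]
      rfl
  have hNTmul : ∀ (w : Fin (d+1) → ℝ) (k : Fin (d+1)),
      (Nᵀ *ᵥ w) k = ∑ a, w a * (Fin.cons 1 (v a) : Fin (d+1) → ℝ) k := by
    intro w k
    show (fun a => N a k) ⬝ᵥ w = _
    rw [dotProduct]
    refine Finset.sum_congr rfl fun a _ => ?_
    rw [mul_comm]
    rfl
  have hsumv : ∀ (w : Fin (d+1) → ℝ) (i : Fin d),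
      (∑ a, w a • v a) i = ∑ a, w a * v a i := by
    intro w i
    simp [Finset.sum_apply]
  have hPdet : N.det ≠ 0 ↔
      (∀ w : Fin (d+1) → ℝ, ∑ a, w a = 0 → ∑ a, w a • v a = 0 → w = 0) := by
    rw [← Matrix.det_transpose]
    constructor
    · intro hdet w hw1 hw2
      by_contra hne
      refine hdet (Matrix.exists_mulVec_eq_zero_iff.mp ⟨w, hne, funext fun k => ?_⟩)
      rw [hNTmul w k]
      refine Fin.cases ?_ ?_ k
      · simpa using hw1
      · intro i
        have := congrFun hw2 i
        rw [hsumv w i] at this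
        simpa using this
    · intro h hdet
      obtain ⟨w, hw0, hw⟩ := Matrix.exists_mulVec_eq_zero_iff.mpr hdet
      refine hw0 (h w ?_ ?_)
      · have := congrFun hw 0
        rw [hNTmul w 0] at this
        simpa using this
      · funext i
        have := congrFun hw i.succ
        rw [hNTmul w i.succ] at this
        rw [hsumv w i]
        simpa using this
  have hP_affine : (∀ w : Fin (d+1) → ℝ, ∑ a, w a = 0 → ∑ a, w a • v a = 0 → w = 0) →
      AffineIndependent ℝ v := by
    intro hP
    rw [affineIndependent_iff]
    intro s w hw1 hw2 e he
    set w' : Fin (d+1) → ℝ := fun a => if a ∈ s then w a else 0 with hw'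
    have h1 : ∑ a, w' a = 0 := by
      rw [hw']
      rw [Finset.sum_ite_mem]
      simpa using hw1
    have h2 : ∑ a, w' a • v a = 0 := by
      have he2 : ∀ a, w' a • v a = if a ∈ s then w a • v a else 0 := by
        intro a
        by_cases h : a ∈ s <;> simp [hw', h]
      rw [Finset.sum_congr rfl (fun a _ => he2 a), Finset.sum_ite_mem]
      simpa using hw2
    have h3 := congrFun (hP w' h1 h2) e
    simpa [hw', he] using h3
  constructor
  · intro hli
    exact ⟨v, hP_affine (hPdet.mp (hQdet.mp (hLIiff.mp hli))), hWS.trans hShull⟩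
  · rintro ⟨v', hAI, hWv'⟩
    apply hLIiff.mpr
    intro g hg
    have hvanish : ∀ j, g 0 + ∑ i, g i.succ * v' j i = 0 := by
      intro j
      have hj : v' j ∈ S := by
        rw [← hWS, hWv']
        exact subset_convexHull ℝ _ (Set.mem_range_self j)
      obtain ⟨w, hw0, hw1, hveq⟩ := hj
      have h1 : ∀ i, v' j i = ∑ a, w a * v a i := hxS _ w hveq
      have key : ∑ i, g i.succ * v' j i = -(g 0) := by
        calc ∑ i, g i.succ * v' j i = ∑ i, ∑ a, g i.succ * (w a * v a i) := by
              refine Finset.sum_congr rfl fun i _ => ?_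
              rw [h1 i, Finset.mul_sum]
          _ = ∑ a, ∑ i, g i.succ * (w a * v a i) := Finset.sum_comm
          _ = ∑ a, w a * (∑ i, g i.succ * v a i) := by
              refine Finset.sum_congr rfl fun a _ => ?_
              rw [Finset.mul_sum]
              refine Finset.sum_congr rfl fun i _ => ?_
              ring
          _ = ∑ a, w a * (-(g 0)) := by
              refine Finset.sum_congr rfl fun a _ => ?_
              have h2 := hg a
              have h3 : (∑ i, g i.succ * v a i) = -(g 0) := by linarith
              rw [h3]
          _ = -(g 0) := by
              rw [← Finset.sum_mul, hw1, one_mul]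
      rw [key]
      ring
    set l : (Fin d → ℝ) →ₗ[ℝ] ℝ := ∑ i, g i.succ • LinearMap.proj i with hl
    have hlapp : ∀ x : Fin d → ℝ, l x = ∑ i, g i.succ * x i := by
      intro x
      rw [hl]
      simp [LinearMap.sum_apply, LinearMap.proj_apply]
    have hlsub := (affineIndependent_iff_linearIndependent_vsub ℝ v' 0).mp hAI
    have hcard : Fintype.card {x : Fin (d+1) // x ≠ (0 : Fin (d+1))} = d := by
      simp [Fintype.card_subtype_compl]
    have hspan := hlsub.span_eq_top_of_card_eq_finrank'
      (by rw [hcard, Module.finrank_fin_fun])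
    have hl0 : l = 0 := by
      have hle : Submodule.span ℝ
          (Set.range fun j : {x : Fin (d+1) // x ≠ (0:Fin (d+1))} => v' ↑j -ᵥ v' 0)
          ≤ LinearMap.ker l := by
        rw [Submodule.span_le]
        rintro _ ⟨j, rfl⟩
        refine LinearMap.mem_ker.mpr ?_
        have h1 := hvanish j.val
        have h2 := hvanish (0 : Fin (d+1))
        have e1 : l (v' ↑j -ᵥ v' 0) = l (v' ↑j) - l (v' 0) := map_sub l _ _
        rw [e1, hlapp, hlapp]
        linarith
      rw [hspan] at hle
      exact LinearMap.ker_eq_top.mp (eq_top_iff.mpr hle)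
    have hgs : ∀ i : Fin d, g i.succ = 0 := by
      intro i
      have h := hlapp (Pi.single i 1)
      rw [hl0] at h
      simp only [LinearMap.zero_apply, Pi.single_apply, mul_ite, mul_one, mul_zero] at h
      rw [Finset.sum_ite_eq' Finset.univ i (fun i' => g i'.succ)] at h
      simpa using h.symm
    have hg0 : g 0 = 0 := by
      have h := hvanish (0 : Fin (d+1))
      have h2 : (∑ i, g i.succ * v' 0 i) = 0 := by
        refine Finset.sum_eq_zero fun i _ => ?_
        rw [hgs i, zero_mul]
      rw [h2] at h
      linarith
    funext k
    refine Fin.cases ?_ ?_ k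
    · exact hg0
    · exact hgs
end

section
/- Let Φ be a channel on ℂ^d with Kraus operators K_j = H_j + iA_j. Then the supremum of the operation fidelity F(Φ,ψ) over unit vectors ψ equals the square of the joint numerical radius w(H₁,…,H_m,A₁,…,A_m), and the infimum equals the square of the Crawford number c(H₁,…,H_m,A₁,…,A_m). -/
open Matrix


lemma herm_real {d : ℕ} (M : Matrix (Fin d) (Fin d) ℂ) (hM : M.IsHermitian)
    (ψ : Fin d → ℂ) : (star ψ ⬝ᵥ (M *ᵥ ψ)).im = 0 := by
  have h : (starRingEnd ℂ) (star ψ ⬝ᵥ (M *ᵥ ψ)) = star ψ ⬝ᵥ (M *ᵥ ψ) := by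
    calc (starRingEnd ℂ) (star ψ ⬝ᵥ (M *ᵥ ψ))
        = star ((M *ᵥ ψ) ⬝ᵥ star ψ) := by rw [dotProduct_comm]; rfl
      _ = star (star ψ) ⬝ᵥ star (M *ᵥ ψ) := by rw [star_dotProduct_star]
      _ = ψ ⬝ᵥ (star ψ ᵥ* Mᴴ) := by rw [star_star, star_mulVec]
      _ = (star ψ ᵥ* Mᴴ) ⬝ᵥ ψ := dotProduct_comm _ _
      _ = star ψ ⬝ᵥ (Mᴴ *ᵥ ψ) := by rw [dotProduct_mulVec]
      _ = star ψ ⬝ᵥ (M *ᵥ ψ) := by rw [hM.eq]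
  exact Complex.conj_eq_iff_im.mp h

lemma sq_sup_inf (T : Set ℝ) (hT : ∀ x ∈ T, 0 ≤ x) :
    sSup ((fun x => x^2) '' T) = (sSup T)^2 ∧
    sInf ((fun x => x^2) '' T) = (sInf T)^2 := by
  have himg : (fun x => x^2) '' T = (fun x => x * |x|) '' T := by
    apply Set.image_congr
    intro x hx
    rw [abs_of_nonneg (hT x hx), sq]
  have hmono : Monotone (fun x : ℝ => x * |x|) := by
    intro a b hab
    show a * |a| ≤ b * |b|
    rcases le_or_gt 0 a with ha | ha
    · rw [abs_of_nonneg ha, abs_of_nonneg (ha.trans hab)]; nlinarith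
    · rcases le_or_gt 0 b with hb | hb
      · rw [abs_of_neg ha, abs_of_nonneg hb]; nlinarith
      · rw [abs_of_neg ha, abs_of_neg hb]; nlinarith
  have hcont : Continuous (fun x : ℝ => x * |x|) := continuous_id.mul continuous_abs
  rcases Set.eq_empty_or_nonempty T with rfl | hne
  · simp [Real.sSup_empty, Real.sInf_empty]
  constructor
  · rcases em (BddAbove T) with hbdd | hbdd
    · have h1 := hmono.map_csSup_of_continuousAt hcont.continuousAt hne hbdd
      have hs : 0 ≤ sSup T := le_csSup_of_le hbdd hne.choose_spec (hT _ hne.choose_spec)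
      rw [himg, ← h1, abs_of_nonneg hs, sq]
    · have h2 : ¬ BddAbove ((fun x => x^2) '' T) := by
        intro ⟨M, hM⟩
        apply hbdd
        refine ⟨max M 1, fun x hx => ?_⟩
        by_contra hx'
        push_neg at hx'
        have h1x : (1:ℝ) ≤ x := le_of_lt ((le_max_right M 1).trans_lt hx')
        have : x^2 ≤ M := hM ⟨x, hx, rfl⟩
        nlinarith [(le_max_left M 1).trans_lt hx']
      rw [Real.sSup_of_not_bddAbove h2, Real.sSup_of_not_bddAbove hbdd]
      norm_num
  · have hbdd : BddBelow T := ⟨0, hT⟩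
    have h1 := hmono.map_csInf_of_continuousAt hcont.continuousAt hne hbdd
    have hs : 0 ≤ sInf T := le_csInf hne hT
    rw [himg, ← h1, abs_of_nonneg hs, sq]

/-- For a channel with Kraus operators `K_j = H_j + i A_j` (with `H_j, A_j`
Hermitian), the supremum of the operation fidelity over unit vectors equals the square of
the joint numerical radius `w(H₁,…,H_m,A₁,…,A_m)`, and the infimum equals the square of
the Crawford number `c(H₁,…,H_m,A₁,…,A_m)`. -/
theorem stmt19 (d m : ℕ) (K H A : Fin m → Matrix (Fin d) (Fin d) ℂ)
    (hH : ∀ j, (H j).IsHermitian) (hA : ∀ j, (A j).IsHermitian)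
    (hK : ∀ j, K j = H j + Complex.I • A j)
    (W : Set (EuclideanSpace ℝ (Fin m ⊕ Fin m)))
    (hW : W = {r | ∃ ψ : Fin d → ℂ, star ψ ⬝ᵥ ψ = 1 ∧
        ∀ t, r t = (star ψ ⬝ᵥ ((Sum.elim H A t) *ᵥ ψ)).re}) :
    sSup {x : ℝ | ∃ ψ : Fin d → ℂ, star ψ ⬝ᵥ ψ = 1 ∧
        x = ∑ j, ‖star ψ ⬝ᵥ (K j *ᵥ ψ)‖ ^ 2} =
      (sSup ((fun r : EuclideanSpace ℝ (Fin m ⊕ Fin m) => ‖r‖) '' W)) ^ 2 ∧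
    sInf {x : ℝ | ∃ ψ : Fin d → ℂ, star ψ ⬝ᵥ ψ = 1 ∧
        x = ∑ j, ‖star ψ ⬝ᵥ (K j *ᵥ ψ)‖ ^ 2} =
      (sInf ((fun r : EuclideanSpace ℝ (Fin m ⊕ Fin m) => ‖r‖) '' W)) ^ 2 := by
  set T : Set ℝ := (fun r : EuclideanSpace ℝ (Fin m ⊕ Fin m) => ‖r‖) '' W with hT
  set R : (Fin d → ℂ) → EuclideanSpace ℝ (Fin m ⊕ Fin m) :=
    fun ψ => (WithLp.equiv 2 _).symm (fun t => (star ψ ⬝ᵥ ((Sum.elim H A t) *ᵥ ψ)).re) with hR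
  have key : ∀ ψ : Fin d → ℂ,
      ∑ j, ‖star ψ ⬝ᵥ (K j *ᵥ ψ)‖ ^ 2 = ‖R ψ‖ ^ 2 := by
    intro ψ
    rw [EuclideanSpace.norm_eq (R ψ), Real.sq_sqrt (by positivity)]
    have hRt : ∀ t, R ψ t = (star ψ ⬝ᵥ ((Sum.elim H A t) *ᵥ ψ)).re := fun t => rfl
    simp only [hRt]
    rw [Fintype.sum_sum_type]
    have hterm : ∀ j, ‖star ψ ⬝ᵥ (K j *ᵥ ψ)‖ ^ 2 =
        (star ψ ⬝ᵥ (H j *ᵥ ψ)).re ^ 2 + (star ψ ⬝ᵥ (A j *ᵥ ψ)).re ^ 2 := by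
      intro j
      have hKj : star ψ ⬝ᵥ (K j *ᵥ ψ) =
          star ψ ⬝ᵥ (H j *ᵥ ψ) + Complex.I * (star ψ ⬝ᵥ (A j *ᵥ ψ)) := by
        rw [hK j, add_mulVec, dotProduct_add, smul_mulVec, dotProduct_smul, smul_eq_mul]
      rw [Complex.sq_norm, Complex.normSq_apply, hKj]
      have hH' := herm_real (H j) (hH j) ψ
      have hA' := herm_real (A j) (hA j) ψ
      simp only [Complex.add_re, Complex.add_im, Complex.mul_re, Complex.mul_im,
        Complex.I_re, Complex.I_im, hH', hA']
      ring
    simp only [hterm, Real.norm_eq_abs, sq_abs, Sum.elim_inl, Sum.elim_inr]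
    rw [Finset.sum_add_distrib]
  have hSet : {x : ℝ | ∃ ψ : Fin d → ℂ, star ψ ⬝ᵥ ψ = 1 ∧
        x = ∑ j, ‖star ψ ⬝ᵥ (K j *ᵥ ψ)‖ ^ 2} = (fun x => x ^ 2) '' T := by
    ext x
    constructor
    · rintro ⟨ψ, hψ, rfl⟩
      refine ⟨‖R ψ‖, ⟨R ψ, ?_, rfl⟩, (key ψ).symm⟩
      rw [hW]
      exact ⟨ψ, hψ, fun t => rfl⟩
    · rintro ⟨y, ⟨r, hr, rfl⟩, rfl⟩
      rw [hW] at hr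
      obtain ⟨ψ, hψ, hrψ⟩ := hr
      have hrR : r = R ψ := PiLp.ext hrψ
      exact ⟨ψ, hψ, by rw [key ψ, hrR]⟩
  rw [hSet]
  exact sq_sup_inf T (by rintro x ⟨r, _, rfl⟩; exact norm_nonneg r)
end
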